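/- Let S and A be finite sets, H a positive integer, d a positive integer, and fix 0 ≤ i ≤ H−1. Let ρ : S → ℝ be nonnegative, let P : S × S × A → ℝ be nonnegative with Σ_{s'∈S} P(s',s,a) = 1 for all s,a, and let π : ℝ^d × S × A → ℝ be differentiable in θ, strictly positive, with Σ_{a∈A} π(θ,s,a) = 1 for all θ,s. For a trajectory τ = (s_0,a_0,…,s_{H-1},a_{H-1},s_H) set f(θ,τ) = ρ(s_0)·Π_{j=0}^{H-1} π(θ,s_j,a_j)·P(s_{j+1},s_j,a_j). Let h be any real-valued function of the prefix (s_0,a_0,…,a_{i-1},s_i) (i.e. h(τ) depends only on s_0,a_0,…,a_{i-1},s_i). Then Σ_τ f(θ,τ)·h(τ)·∇_θ log π(θ,s_i,a_i) = 0, where the sum ranges over all trajectories. -/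

import Mathlib

private lemma sum_update_eq {ι β M : Type*} [Fintype ι] [DecidableEq ι] [Fintype β]
    [AddCommMonoid M] (j : ι) (g : (ι → β) → M) :
    ∑ f : ι → β, ∑ b : β, g (Function.update f j b) = Fintype.card β • ∑ f : ι → β, g f := by
  classical
  set e := Equiv.funSplitAt j β with he
  have key : ∀ (b c : β) (r : {k // k ≠ j} → β),
      Function.update (e.symm (c, r)) j b = e.symm (b, r) := by
    intro b c r
    funext k
    by_cases hk : k = j
    · subst hk; simp [he, Equiv.funSplitAt, Equiv.piSplitAt]
    · simp [Function.update, hk, he, Equiv.funSplitAt, Equiv.piSplitAt]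
  calc ∑ f : ι → β, ∑ b : β, g (Function.update f j b)
      = ∑ p : β × ({k // k ≠ j} → β), ∑ b : β, g (Function.update (e.symm p) j b) :=
        (Equiv.sum_comp e.symm (fun f => ∑ b : β, g (Function.update f j b))).symm
    _ = ∑ c : β, ∑ r : {k // k ≠ j} → β, ∑ b : β, g (e.symm (b, r)) := by
        rw [Fintype.sum_prod_type]
        exact Finset.sum_congr rfl fun c _ => Finset.sum_congr rfl fun r _ =>
          Finset.sum_congr rfl fun b _ => by rw [key]
    _ = ∑ c : β, ∑ f : ι → β, g f := by
        refine Finset.sum_congr rfl fun c _ => ?_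
        rw [Finset.sum_comm]
        exact (Fintype.sum_prod_type (f := fun p => g (e.symm p))).symm.trans
          (Equiv.sum_comp e.symm g)
    _ = Fintype.card β • ∑ f : ι → β, g f := by
        rw [Finset.sum_const, Finset.card_univ]

private lemma sum_update_eq2 {ι1 β1 ι2 β2 M : Type*} [Fintype ι1] [DecidableEq ι1] [Fintype β1]
    [Fintype ι2] [DecidableEq ι2] [Fintype β2] [AddCommMonoid M]
    (j1 : ι1) (j2 : ι2) (g : ((ι1 → β1) × (ι2 → β2)) → M) :
    ∑ τ : (ι1 → β1) × (ι2 → β2), ∑ b1 : β1, ∑ b2 : β2,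
      g (Function.update τ.1 j1 b1, Function.update τ.2 j2 b2)
    = (Fintype.card β1 * Fintype.card β2) • ∑ τ : (ι1 → β1) × (ι2 → β2), g τ := by
  rw [Fintype.sum_prod_type]
  calc ∑ f1 : ι1 → β1, ∑ f2 : ι2 → β2, ∑ b1 : β1, ∑ b2 : β2,
        g (Function.update f1 j1 b1, Function.update f2 j2 b2)
      = ∑ f1 : ι1 → β1, ∑ b1 : β1, Fintype.card β2 •
          ∑ f2 : ι2 → β2, g (Function.update f1 j1 b1, f2) := by
        refine Finset.sum_congr rfl fun f1 _ => ?_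
        rw [Finset.sum_comm]
        exact Finset.sum_congr rfl fun b1 _ =>
          sum_update_eq j2 (fun f2 => g (Function.update f1 j1 b1, f2))
    _ = Fintype.card β2 • ∑ f1 : ι1 → β1, ∑ b1 : β1,
          ∑ f2 : ι2 → β2, g (Function.update f1 j1 b1, f2) := by
        rw [Finset.smul_sum]
        exact Finset.sum_congr rfl fun f1 _ => (Finset.smul_sum).symm
    _ = Fintype.card β2 • (Fintype.card β1 • ∑ f1 : ι1 → β1, ∑ f2 : ι2 → β2, g (f1, f2)) := by
        congr 1
        exact sum_update_eq j1 (fun f1 => ∑ f2 : ι2 → β2, g (f1, f2))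
    _ = (Fintype.card β1 * Fintype.card β2) • ∑ τ : (ι1 → β1) × (ι2 → β2), g τ := by
        rw [smul_smul, Nat.mul_comm, Fintype.sum_prod_type]

/-- The probability of a trajectory `τ = (s, a)` over horizon `H` under policy
parameters `θ`: `f(θ,τ) = ρ(s₀) · ∏ⱼ π(θ,sⱼ,aⱼ) · ∏ⱼ P(sⱼ₊₁,sⱼ,aⱼ)`. -/
noncomputable def trajProb {S A : Type*} {d H : ℕ}
    (ρ : S → ℝ) (P : S → S → A → ℝ)
    (π : EuclideanSpace ℝ (Fin d) → S → A → ℝ)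
    (θ : EuclideanSpace ℝ (Fin d))
    (τ : (Fin (H + 1) → S) × (Fin H → A)) : ℝ :=
  ρ (τ.1 0) * (∏ j : Fin H, π θ (τ.1 j.castSucc) (τ.2 j))
    * ∏ j : Fin H, P (τ.1 j.succ) (τ.1 j.castSucc) (τ.2 j)

/-- The probability of the first `m` steps of a trajectory. -/
private noncomputable def pF {S A : Type*} {d H : ℕ}
    (ρ : S → ℝ) (P : S → S → A → ℝ)
    (π : EuclideanSpace ℝ (Fin d) → S → A → ℝ)
    (θ : EuclideanSpace ℝ (Fin d)) (m : ℕ)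
    (τ : (Fin (H + 1) → S) × (Fin H → A)) : ℝ :=
  ρ (τ.1 0) * ∏ j : Fin H, (if (j : ℕ) < m then
    π θ (τ.1 j.castSucc) (τ.2 j) * P (τ.1 j.succ) (τ.1 j.castSucc) (τ.2 j) else 1)

/-- **Causality lemma.** The score `∇_θ log π(aᵢ|sᵢ)` of the action at step `i` is
uncorrelated with any function `h` of the trajectory prefix `(s₀,a₀,…,a_{i-1},sᵢ)`:
`∑_τ f(θ,τ) · h(τ) • ∇_θ log π(θ,sᵢ,aᵢ) = 0`. -/
theorem stmt_5 {S A : Type*} [Fintype S] [Fintype A] {H d : ℕ}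
    (hH : 0 < H) (hd : 0 < d) (i : Fin H)
    (ρ : S → ℝ) (hρ : ∀ s, 0 ≤ ρ s)
    (P : S → S → A → ℝ) (hPnonneg : ∀ s' s a, 0 ≤ P s' s a)
    (hPsum : ∀ (s : S) (a : A), ∑ s' : S, P s' s a = 1)
    (π : EuclideanSpace ℝ (Fin d) → S → A → ℝ)
    (hdiff : ∀ (s : S) (a : A), Differentiable ℝ (fun θ => π θ s a))
    (hpos : ∀ (θ : EuclideanSpace ℝ (Fin d)) (s : S) (a : A), 0 < π θ s a)
    (hsum : ∀ (θ : EuclideanSpace ℝ (Fin d)) (s : S), ∑ a : A, π θ s a = 1)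
    (h : ((Fin (H + 1) → S) × (Fin H → A)) → ℝ)
    (hprefix : ∀ τ τ' : (Fin (H + 1) → S) × (Fin H → A),
      (∀ j : Fin (H + 1), j.val ≤ i.val → τ.1 j = τ'.1 j) →
      (∀ j : Fin H, j.val < i.val → τ.2 j = τ'.2 j) → h τ = h τ')
    (θ : EuclideanSpace ℝ (Fin d)) :
    ∑ τ : (Fin (H + 1) → S) × (Fin H → A),
      (trajProb ρ P π θ τ * h τ) •
        gradient (fun θ' => Real.log (π θ' (τ.1 i.castSucc) (τ.2 i))) θ = 0 := by
  classical
  by_cases hSA : Nonempty S ∧ Nonempty A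
  case neg =>
    rcases not_and_or.mp hSA with hS | hA
    · haveI : IsEmpty S := not_nonempty_iff.mp hS
      haveI : IsEmpty ((Fin (H + 1) → S) × (Fin H → A)) :=
        ⟨fun τ => IsEmpty.false (τ.1 0)⟩
      rw [Finset.univ_eq_empty, Finset.sum_empty]
    · haveI : IsEmpty A := not_nonempty_iff.mp hA
      haveI : IsEmpty ((Fin (H + 1) → S) × (Fin H → A)) :=
        ⟨fun τ => IsEmpty.false (τ.2 ⟨0, hH⟩)⟩
      rw [Finset.univ_eq_empty, Finset.sum_empty]
  case pos =>
   obtain ⟨hS, hA⟩ := hSA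
   haveI := hS; haveI := hA
   have hn : (Fintype.card S * Fintype.card A : ℕ) ≠ 0 :=
     Nat.mul_ne_zero Fintype.card_ne_zero Fintype.card_ne_zero
   -- the partial-trajectory probability lemmas
   have hF_top : ∀ τ : (Fin (H + 1) → S) × (Fin H → A),
       pF ρ P π θ H τ = trajProb ρ P π θ τ := by
     intro τ
     unfold pF trajProb
     have hι : ∀ j : Fin H, (if (j : ℕ) < H then
         π θ (τ.1 j.castSucc) (τ.2 j) * P (τ.1 j.succ) (τ.1 j.castSucc) (τ.2 j) else 1)
         = π θ (τ.1 j.castSucc) (τ.2 j) * P (τ.1 j.succ) (τ.1 j.castSucc) (τ.2 j) :=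
       fun j => if_pos j.isLt
     rw [Finset.prod_congr rfl fun j _ => hι j, Finset.prod_mul_distrib, ← mul_assoc]
   have hF_succ : ∀ (jA : Fin H) (τ : (Fin (H + 1) → S) × (Fin H → A)),
       pF ρ P π θ (jA.val + 1) τ = pF ρ P π θ jA.val τ *
         (π θ (τ.1 jA.castSucc) (τ.2 jA) * P (τ.1 jA.succ) (τ.1 jA.castSucc) (τ.2 jA)) := by
     intro jA τ
     unfold pF
     rw [mul_assoc]
     congr 1
     have hfilter : Finset.univ.filter (fun j : Fin H => (j : ℕ) < jA.val + 1)
         = insert jA (Finset.univ.filter fun j : Fin H => (j : ℕ) < jA.val) := by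
       ext j
       simp only [Finset.mem_filter, Finset.mem_univ, true_and, Finset.mem_insert, Fin.ext_iff]
       omega
     have hnot : jA ∉ Finset.univ.filter (fun j : Fin H => (j : ℕ) < jA.val) := by simp
     rw [← Finset.prod_filter, ← Finset.prod_filter, hfilter, Finset.prod_insert hnot, mul_comm]
   have hF_upd : ∀ (m : ℕ) (jA : Fin H), m ≤ jA.val →
       ∀ (τ : (Fin (H + 1) → S) × (Fin H → A)) (s' : S) (b : A),
       pF ρ P π θ m (Function.update τ.1 jA.succ s', Function.update τ.2 jA b)
         = pF ρ P π θ m τ := by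
     intro m jA hj τ s' b
     have h1 : (0 : Fin (H + 1)) ≠ jA.succ := by
       simp only [ne_eq, Fin.ext_iff, Fin.val_zero, Fin.val_succ]; omega
     unfold pF
     dsimp only
     rw [Function.update_of_ne h1]
     congr 1
     refine Finset.prod_congr rfl fun j _ => ?_
     by_cases hjm : (j : ℕ) < m
     · have h2 : j.castSucc ≠ jA.succ := by
         simp only [ne_eq, Fin.ext_iff, Fin.coe_castSucc, Fin.val_succ]; omega
       have h3 : j.succ ≠ jA.succ := by
         simp only [ne_eq, Fin.ext_iff, Fin.val_succ]; omega
       have h4 : j ≠ jA := by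
         simp only [ne_eq, Fin.ext_iff]; omega
       simp only [if_pos hjm, Function.update_of_ne h2, Function.update_of_ne h3,
         Function.update_of_ne h4]
     · simp only [if_neg hjm]
   have hh_upd : ∀ (jA : Fin H), i.val ≤ jA.val →
       ∀ (τ : (Fin (H + 1) → S) × (Fin H → A)) (s' : S) (b : A),
       h (Function.update τ.1 jA.succ s', Function.update τ.2 jA b) = h τ := by
     intro jA hj τ s' b
     apply hprefix
     · intro j hji
       have h1 : j ≠ jA.succ := by
         simp only [ne_eq, Fin.ext_iff, Fin.val_succ]; omega
       exact Function.update_of_ne h1 _ _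
     · intro j hji
       have h1 : j ≠ jA := by
         simp only [ne_eq, Fin.ext_iff]; omega
       exact Function.update_of_ne h1 _ _
   -- the key gradient identity
   have hkey : ∀ s : S,
       ∑ b : A, (π θ s b) • gradient (fun θ' => Real.log (π θ' s b)) θ = 0 := by
     intro s
     have h1 : ∀ b : A, (π θ s b) • gradient (fun θ' => Real.log (π θ' s b)) θ
         = gradient (fun θ' => π θ' s b) θ := by
       intro b
       have hg := ((hdiff s b) θ).hasGradientAt
       have hfd := hg.hasFDerivAt
       have hlog := (Real.hasDerivAt_log (ne_of_gt (hpos θ s b))).comp_hasFDerivAt θ hfd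
       have hlogg : HasGradientAt (fun θ' => Real.log (π θ' s b))
           ((InnerProductSpace.toDual ℝ (EuclideanSpace ℝ (Fin d))).symm
             ((π θ s b)⁻¹ • (InnerProductSpace.toDual ℝ (EuclideanSpace ℝ (Fin d)))
               (gradient (fun θ' => π θ' s b) θ))) θ := hlog.hasGradientAt
       rw [hlogg.gradient, map_smulₛₗ, LinearIsometryEquiv.symm_apply_apply]
       simp only [starRingEnd_apply, star_trivial]
       rw [smul_smul, mul_inv_cancel₀ (ne_of_gt (hpos θ s b)), one_smul]
     rw [Finset.sum_congr rfl fun b _ => h1 b]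
     have hG : HasGradientAt (fun θ' => ∑ b : A, π θ' s b)
         (∑ b : A, gradient (fun θ' => π θ' s b) θ) θ := by
       rw [hasGradientAt_iff_hasFDerivAt, map_sum]
       exact HasFDerivAt.fun_sum fun b _ => ((hdiff s b) θ).hasGradientAt.hasFDerivAt
     have hG1 : HasGradientAt (fun θ' => ∑ b : A, π θ' s b) 0 θ := by
       have hfun : (fun θ' : EuclideanSpace ℝ (Fin d) => ∑ b : A, π θ' s b)
           = fun _ => (1 : ℝ) := funext fun θ' => hsum θ' s
       rw [hfun]
       exact hasGradientAt_const θ 1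
     exact hG.unique hG1
   -- main induction
   have main : ∀ m : ℕ, i.val + 1 ≤ m → m ≤ H →
       ∑ τ : (Fin (H + 1) → S) × (Fin H → A),
         (pF ρ P π θ m τ * h τ) •
           gradient (fun θ' => Real.log (π θ' (τ.1 i.castSucc) (τ.2 i))) θ = 0 := by
     intro m hm1
     induction m, hm1 using Nat.le_induction with
     | base =>
       intro _
       have hcount := sum_update_eq2 (i.succ) i
         (fun τ : (Fin (H + 1) → S) × (Fin H → A) =>
           (pF ρ P π θ (i.val + 1) τ * h τ) •
             gradient (fun θ' => Real.log (π θ' (τ.1 i.castSucc) (τ.2 i))) θ)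
       have h0 : (Fintype.card S * Fintype.card A) •
           ∑ τ : (Fin (H + 1) → S) × (Fin H → A),
             (pF ρ P π θ (i.val + 1) τ * h τ) •
               gradient (fun θ' => Real.log (π θ' (τ.1 i.castSucc) (τ.2 i))) θ = 0 := by
         refine hcount.symm.trans ?_
         refine Finset.sum_eq_zero fun τ _ => ?_
         have hcs : i.castSucc ≠ i.succ := by
           simp only [ne_eq, Fin.ext_iff, Fin.coe_castSucc, Fin.val_succ]; omega
         simp only [hF_succ i, hF_upd i.val i (le_refl _), hh_upd i (le_refl _),
           Function.update_self, Function.update_of_ne hcs]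
         rw [Finset.sum_comm]
         have hb : ∀ b : A, (∑ s' : S,
             ((pF ρ P π θ i.val τ * (π θ (τ.1 i.castSucc) b * P s' (τ.1 i.castSucc) b)) * h τ) •
               gradient (fun θ' => Real.log (π θ' (τ.1 i.castSucc) b)) θ)
             = (pF ρ P π θ i.val τ * h τ) • ((π θ (τ.1 i.castSucc) b) •
               gradient (fun θ' => Real.log (π θ' (τ.1 i.castSucc) b)) θ) := by
           intro b
           rw [← Finset.sum_smul, smul_smul]
           congr 1
           have hsc : ∀ s' : S,
               (pF ρ P π θ i.val τ * (π θ (τ.1 i.castSucc) b * P s' (τ.1 i.castSucc) b)) * h τ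
               = ((pF ρ P π θ i.val τ * h τ) * π θ (τ.1 i.castSucc) b) *
                 P s' (τ.1 i.castSucc) b := fun s' => by ring
           rw [Finset.sum_congr rfl fun s' _ => hsc s', ← Finset.mul_sum,
             hPsum (τ.1 i.castSucc) b, mul_one]
         rw [Finset.sum_congr rfl fun b _ => hb b, ← Finset.smul_sum,
           hkey (τ.1 i.castSucc), smul_zero]
       rw [← Nat.cast_smul_eq_nsmul ℝ] at h0
       rcases smul_eq_zero.mp h0 with hc | hgoal
       · exact absurd (by exact_mod_cast hc : (Fintype.card S * Fintype.card A : ℕ) = 0) hn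
       · exact hgoal
     | succ m hm ih =>
       intro hmH
       have hmlt : m < H := lt_of_lt_of_le (Nat.lt_succ_self m) hmH
       set jA : Fin H := ⟨m, hmlt⟩ with hjA
       have hcount := sum_update_eq2 (jA.succ) jA
         (fun τ : (Fin (H + 1) → S) × (Fin H → A) =>
           (pF ρ P π θ (m + 1) τ * h τ) •
             gradient (fun θ' => Real.log (π θ' (τ.1 i.castSucc) (τ.2 i))) θ)
       have hFs : ∀ (τ : (Fin (H + 1) → S) × (Fin H → A)),
           pF ρ P π θ (m + 1) τ = pF ρ P π θ m τ *
             (π θ (τ.1 jA.castSucc) (τ.2 jA) * P (τ.1 jA.succ) (τ.1 jA.castSucc) (τ.2 jA)) :=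
         fun τ => hF_succ jA τ
       have h0 : (Fintype.card S * Fintype.card A) •
           ∑ τ : (Fin (H + 1) → S) × (Fin H → A),
             (pF ρ P π θ (m + 1) τ * h τ) •
               gradient (fun θ' => Real.log (π θ' (τ.1 i.castSucc) (τ.2 i))) θ = 0 := by
         refine hcount.symm.trans ?_
         refine Eq.trans (Finset.sum_congr rfl fun τ _ => ?_)
           (ih (le_of_lt (Nat.lt_of_succ_le hmH)))
         have hcs : i.castSucc ≠ jA.succ := by
           simp only [ne_eq, Fin.ext_iff, Fin.coe_castSucc, Fin.val_succ, hjA]; omega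
         have hia : i ≠ jA := by
           simp only [ne_eq, Fin.ext_iff, hjA]; omega
         have hcs2 : jA.castSucc ≠ jA.succ := by
           simp only [ne_eq, Fin.ext_iff, Fin.coe_castSucc, Fin.val_succ]; omega
         have hj : m ≤ jA.val := le_refl m
         have hij : i.val ≤ jA.val := Nat.le_of_succ_le hm
         simp only [hFs, hF_upd m jA hj, hh_upd jA hij,
           Function.update_self, Function.update_of_ne hcs, Function.update_of_ne hia,
           Function.update_of_ne hcs2]
         rw [Finset.sum_comm]
         have hb : ∀ b : A, (∑ s' : S,
             ((pF ρ P π θ m τ * (π θ (τ.1 jA.castSucc) b * P s' (τ.1 jA.castSucc) b)) * h τ) •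
               gradient (fun θ' => Real.log (π θ' (τ.1 i.castSucc) (τ.2 i))) θ)
             = ((pF ρ P π θ m τ * h τ) * π θ (τ.1 jA.castSucc) b) •
               gradient (fun θ' => Real.log (π θ' (τ.1 i.castSucc) (τ.2 i))) θ := by
           intro b
           rw [← Finset.sum_smul]
           congr 1
           have hsc : ∀ s' : S,
               (pF ρ P π θ m τ * (π θ (τ.1 jA.castSucc) b * P s' (τ.1 jA.castSucc) b)) * h τ
               = ((pF ρ P π θ m τ * h τ) * π θ (τ.1 jA.castSucc) b) *
                 P s' (τ.1 jA.castSucc) b := fun s' => by ring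
           rw [Finset.sum_congr rfl fun s' _ => hsc s', ← Finset.mul_sum,
             hPsum (τ.1 jA.castSucc) b, mul_one]
         rw [Finset.sum_congr rfl fun b _ => hb b, ← Finset.sum_smul, ← Finset.mul_sum,
           hsum θ (τ.1 jA.castSucc), mul_one]
       rw [← Nat.cast_smul_eq_nsmul ℝ] at h0
       rcases smul_eq_zero.mp h0 with hc | hgoal
       · exact absurd (by exact_mod_cast hc : (Fintype.card S * Fintype.card A : ℕ) = 0) hn
       · exact hgoal
   have hrw : ∑ τ : (Fin (H + 1) → S) × (Fin H → A),
       (trajProb ρ P π θ τ * h τ) •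
         gradient (fun θ' => Real.log (π θ' (τ.1 i.castSucc) (τ.2 i))) θ
       = ∑ τ : (Fin (H + 1) → S) × (Fin H → A),
       (pF ρ P π θ H τ * h τ) •
         gradient (fun θ' => Real.log (π θ' (τ.1 i.castSucc) (τ.2 i))) θ :=
     Finset.sum_congr rfl fun τ _ => by rw [hF_top τ]
   rw [hrw]
   exact main H (Nat.succ_le_of_lt i.isLt) le_rfl
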